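/- Consider an m×m table with non-negative real values on its cells, and define the table's score as the maximum total value over monotone lattice paths of 2m−1 cells from the bottom-left corner to the top-right corner (each step moves up or right). For any positive integer Δ, there exists a family of pairwise non-conflicting Δ-multisegments whose total covered value is at least (Δ−1)/Δ times the table's score. -/

import Mathlib

/-- A segment in an `m×m` table: a set of consecutive cells in one row
(`horiz = true`, cells `(c, line)` for `lo ≤ c ≤ hi`) or in one column
(`horiz = false`, cells `(line, r)` for `lo ≤ r ≤ hi`). Cells are pairs
(column, row), with `(0,0)` the bottom-left corner. -/
structure Seg (m : ℕ) where
  horiz : Bool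
  line : ℕ
  lo : ℕ
  hi : ℕ
  hlo : lo ≤ hi
  hhi : hi < m
  hline : line < m

/-- The set of cells covered by a segment. -/
def Seg.cells {m : ℕ} (s : Seg m) : Finset (ℕ × ℕ) :=
  if s.horiz then (Finset.Icc s.lo s.hi).image fun c => (c, s.line)
  else (Finset.Icc s.lo s.hi).image fun r => (s.line, r)

/-- The first (leftmost/bottommost) cell of a segment. -/
def Seg.first {m : ℕ} (s : Seg m) : ℕ × ℕ :=
  if s.horiz then (s.lo, s.line) else (s.line, s.lo)

/-- The last (rightmost/topmost) cell of a segment. -/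
def Seg.last {m : ℕ} (s : Seg m) : ℕ × ℕ :=
  if s.horiz then (s.hi, s.line) else (s.line, s.hi)

/-- `A` precedes `B`: every cell of `A` is strictly above and strictly to the
right of every cell of `B`. -/
def segPrecedes {m : ℕ} (A B : Seg m) : Prop :=
  ∀ cA ∈ A.cells, ∀ cB ∈ B.cells, cB.1 < cA.1 ∧ cB.2 < cA.2

/-- A `Δ`-multisegment: `Δ` segments listed in order. -/
def MultiSeg (Δ m : ℕ) := Fin Δ → Seg m

/-- The chaining condition: the last cell of each segment coincides with the
first cell of the next one. -/
def MultiSeg.chain {Δ m : ℕ} (F : MultiSeg Δ m) : Prop :=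
  ∀ i : ℕ, (h : i + 1 < Δ) → (F ⟨i, by omega⟩).last = (F ⟨i + 1, h⟩).first

/-- The cells covered by a multisegment. -/
def MultiSeg.cells {Δ m : ℕ} (F : MultiSeg Δ m) : Finset (ℕ × ℕ) :=
  Finset.univ.biUnion fun i => (F i).cells

/-- Two multisegments are non-conflicting if each segment of one precedes or is
preceded by each segment of the other. -/
def msNonConf {Δ m : ℕ} (F G : MultiSeg Δ m) : Prop :=
  ∀ i j, segPrecedes (F i) (G j) ∨ segPrecedes (G j) (F i)

/-- The value of a multisegment: the sum of the values of the cells it covers. -/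
def msValue {Δ m : ℕ} (v : ℕ → ℕ → ℝ) (F : MultiSeg Δ m) : ℝ :=
  ∑ c ∈ F.cells, v c.1 c.2

/-- A monotone lattice path of `2m−1` cells from the bottom-left corner `(0,0)`
to the top-right corner `(m−1, m−1)`, each step moving up or right. -/
def isPath (m : ℕ) (f : ℕ → ℕ × ℕ) : Prop :=
  f 0 = (0, 0) ∧ f (2 * m - 2) = (m - 1, m - 1) ∧
  ∀ i < 2 * m - 2, f (i + 1) = ((f i).1 + 1, (f i).2) ∨ f (i + 1) = ((f i).1, (f i).2 + 1)

namespace Stmt18Aux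

variable {m : ℕ} {f : ℕ → ℕ × ℕ}

def dir (f : ℕ → ℕ × ℕ) (i : ℕ) : Bool := decide ((f (i+1)).2 = (f i).2)

lemma step_eq (hf : isPath m f) {i : ℕ} (hi : i < 2*m-2) :
    f (i+1) = if dir f i then ((f i).1 + 1, (f i).2) else ((f i).1, (f i).2 + 1) := by
  rcases hf.2.2 i hi with h | h <;> simp [dir, h]

lemma coord_sum (hf : isPath m f) : ∀ i, i ≤ 2*m-2 → (f i).1 + (f i).2 = i := by
  intro i
  induction i with
  | zero => intro _; rw [hf.1]; rfl
  | succ n ih =>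
    intro h
    have hn : n < 2*m-2 := by omega
    have hih := ih (by omega)
    rcases hf.2.2 n hn with h' | h' <;> rw [h'] <;> simp <;> omega

lemma path_mono (hf : isPath m f) {i j : ℕ} (hij : i ≤ j) (hj : j ≤ 2*m-2) :
    (f i).1 ≤ (f j).1 ∧ (f i).2 ≤ (f j).2 := by
  obtain ⟨k, rfl⟩ := Nat.exists_eq_add_of_le hij
  clear hij
  induction k with
  | zero => simp
  | succ n ih =>
    have h1 : i + n < 2*m-2 := by omega
    have hih := ih (by omega)
    rcases hf.2.2 (i+n) h1 with h' | h' <;>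
      rw [show i + (n+1) = (i+n)+1 by omega, h'] <;> constructor <;> simp <;> omega

lemma coord_lt (hm : 0 < m) (hf : isPath m f) {i : ℕ} (hi : i ≤ 2*m-2) :
    (f i).1 < m ∧ (f i).2 < m := by
  have h := path_mono hf hi le_rfl
  rw [hf.2.1] at h
  simp at h
  omega

lemma path_inj (hf : isPath m f) {i j : ℕ} (hi : i ≤ 2*m-2) (hj : j ≤ 2*m-2)
    (hij : f i = f j) : i = j := by
  have h1 := coord_sum hf i hi
  have h2 := coord_sum hf j hj
  rw [hij] at h1; omega

def straightOn (f : ℕ → ℕ × ℕ) (u v : ℕ) : Prop :=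
  ∀ p, u < p → p < v → dir f (p-1) = dir f p

lemma dir_const {u v : ℕ} (hs : straightOn f u v) :
    ∀ i, u ≤ i → i < v → dir f i = dir f u := by
  intro i hui hiv
  obtain ⟨k, rfl⟩ := Nat.exists_eq_add_of_le hui
  clear hui
  induction k with
  | zero => rfl
  | succ n ih =>
    have h1 : dir f (u + (n+1) - 1) = dir f (u + (n+1)) := hs _ (by omega) (by omega)
    have h2 := ih (by omega)
    rw [show u + (n+1) - 1 = u + n by omega] at h1
    rw [← h1, h2]

lemma run_horiz (hf : isPath m f) {u v : ℕ} (hv : v ≤ 2*m-2)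
    (hs : straightOn f u v) (hd : dir f u = true) :
    ∀ i, u ≤ i → i ≤ v → f i = ((f u).1 + (i - u), (f u).2) := by
  intro i hui hiv
  obtain ⟨k, rfl⟩ := Nat.exists_eq_add_of_le hui
  clear hui
  induction k with
  | zero => simp
  | succ n ih =>
    have hlt : u + n < v := by omega
    have hd2 : dir f (u+n) = true := (dir_const hs (u+n) (by omega) hlt).trans hd
    have hstep := step_eq hf (show u+n < 2*m-2 by omega)
    rw [hd2] at hstep
    simp only [if_true] at hstep
    have hihn := ih (by omega)
    rw [show u + (n+1) = (u+n)+1 by omega, hstep, hihn]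
    simp [Prod.ext_iff]
    omega

lemma run_vert (hf : isPath m f) {u v : ℕ} (hv : v ≤ 2*m-2)
    (hs : straightOn f u v) (hd : dir f u = false) :
    ∀ i, u ≤ i → i ≤ v → f i = ((f u).1, (f u).2 + (i - u)) := by
  intro i hui hiv
  obtain ⟨k, rfl⟩ := Nat.exists_eq_add_of_le hui
  clear hui
  induction k with
  | zero => simp
  | succ n ih =>
    have hlt : u + n < v := by omega
    have hd2 : dir f (u+n) = false := (dir_const hs (u+n) (by omega) hlt).trans hd
    have hstep := step_eq hf (show u+n < 2*m-2 by omega)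
    rw [hd2] at hstep
    simp only [Bool.false_eq_true, if_false] at hstep
    have hihn := ih (by omega)
    rw [show u + (n+1) = (u+n)+1 by omega, hstep, hihn]
    simp [Prod.ext_iff]
    omega

lemma seg_exists (hm : 0 < m) (hf : isPath m f) {u v : ℕ} (huv : u ≤ v) (hv : v ≤ 2*m-2)
    (hs : straightOn f u v) :
    ∃ s : Seg m, s.first = f u ∧ s.last = f v ∧ s.cells = (Finset.Icc u v).image f := by
  have hu : u ≤ 2*m-2 := le_trans huv hv
  rcases eq_or_lt_of_le huv with rfl | hlt
  · refine ⟨⟨true, (f u).2, (f u).1, (f u).1, le_rfl, (coord_lt hm hf hu).1,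
      (coord_lt hm hf hu).2⟩, ?_, ?_, ?_⟩
    · simp [Seg.first]
    · simp [Seg.last]
    · simp [Seg.cells]
  · rcases Bool.eq_false_or_eq_true (dir f u) with hd | hd
    · -- horizontal
      have hrun := run_horiz hf hv hs hd
      have hfv : f v = ((f u).1 + (v - u), (f u).2) := hrun v huv le_rfl
      refine ⟨⟨true, (f u).2, (f u).1, (f v).1, ?_, (coord_lt hm hf hv).1,
        (coord_lt hm hf hu).2⟩, ?_, ?_, ?_⟩
      · rw [hfv]; simp
      · simp [Seg.first]
      · rw [Seg.last]; simp only [if_true]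
        rw [hfv]
      · ext x
        rw [Seg.cells]
        simp only [if_true, Finset.mem_image, Finset.mem_Icc]
        constructor
        · rintro ⟨cc, ⟨h1, h2⟩, rfl⟩
          refine ⟨u + (cc - (f u).1), ⟨by omega, ?_⟩, ?_⟩
          · rw [hfv] at h2; simp at h2; omega
          · rw [hrun _ (by omega) ?_]
            · simp [Prod.ext_iff]; omega
            · rw [hfv] at h2; simp at h2; omega
        · rintro ⟨i, ⟨h1, h2⟩, rfl⟩
          refine ⟨(f u).1 + (i - u), ⟨by omega, ?_⟩, ?_⟩
          · rw [hfv]; simp; omega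
          · rw [hrun i h1 h2]

    · -- vertical
      have hrun := run_vert hf hv hs hd
      have hfv : f v = ((f u).1, (f u).2 + (v - u)) := hrun v huv le_rfl
      refine ⟨⟨false, (f u).1, (f u).2, (f v).2, ?_, (coord_lt hm hf hv).2,
        (coord_lt hm hf hu).1⟩, ?_, ?_, ?_⟩
      · rw [hfv]; simp
      · simp [Seg.first]
      · rw [Seg.last]; simp only [Bool.false_eq_true, if_false]
        rw [hfv]
      · ext x
        rw [Seg.cells]
        simp only [Bool.false_eq_true, if_false, Finset.mem_image, Finset.mem_Icc]
        constructor
        · rintro ⟨cc, ⟨h1, h2⟩, rfl⟩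
          refine ⟨u + (cc - (f u).2), ⟨by omega, ?_⟩, ?_⟩
          · rw [hfv] at h2; simp at h2; omega
          · rw [hrun _ (by omega) ?_]
            · simp [Prod.ext_iff]; omega
            · rw [hfv] at h2; simp at h2; omega
        · rintro ⟨i, ⟨h1, h2⟩, rfl⟩
          refine ⟨(f u).2 + (i - u), ⟨by omega, ?_⟩, ?_⟩
          · rw [hfv]; simp; omega
          · rw [hrun i h1 h2]
def corners (f : ℕ → ℕ × ℕ) (m : ℕ) : Finset ℕ :=
  (Finset.Ioo 0 (2*m-2)).filter fun p => dir f (p-1) ≠ dir f p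

lemma corners_mem {p : ℕ} (hp : p ∈ corners f m) :
    0 < p ∧ p < 2*m-2 ∧ dir f (p-1) ≠ dir f p := by
  simp only [corners, Finset.mem_filter, Finset.mem_Ioo] at hp
  exact ⟨hp.1.1, hp.1.2, hp.2⟩

lemma corner_jump (hf : isPath m f) {p : ℕ} (hp : p ∈ corners f m) :
    (f (p+1)).1 = (f (p-1)).1 + 1 ∧ (f (p+1)).2 = (f (p-1)).2 + 1 := by
  obtain ⟨hp0, hpN, hd⟩ := corners_mem hp
  have h1 := step_eq hf (show p - 1 < 2*m-2 by omega)
  have h2 := step_eq hf hpN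
  rw [show p - 1 + 1 = p by omega] at h1
  rcases Bool.eq_false_or_eq_true (dir f (p-1)) with hd1 | hd1
  · have hd2 : dir f p = false := by
      rcases Bool.eq_false_or_eq_true (dir f p) with h | h
      · exact absurd (hd1.trans h.symm) hd
      · exact h
    rw [hd1] at h1; rw [hd2] at h2
    simp only [if_true, Bool.false_eq_true, if_false] at h1 h2
    rw [h2, h1]; simp
  · have hd2 : dir f p = true := by
      rcases Bool.eq_false_or_eq_true (dir f p) with h | h
      · exact h
      · exact absurd (hd1.trans h.symm) hd
    rw [hd1] at h1; rw [hd2] at h2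
    simp only [if_true, Bool.false_eq_true, if_false] at h1 h2
    rw [h2, h1]; simp

/-- Enumeration of a finite set of naturals in increasing order, with junk value. -/
noncomputable def enumF (s : Finset ℕ) (junk : ℕ) : ℕ → ℕ :=
  fun j => if h : j < s.card then (s.orderIsoOfFin rfl ⟨j, h⟩ : ℕ) else junk

lemma enumF_mem {s : Finset ℕ} {junk j : ℕ} (h : j < s.card) : enumF s junk j ∈ s := by
  rw [enumF, dif_pos h]
  exact (s.orderIsoOfFin rfl ⟨j, h⟩).2

lemma enumF_lt_iff {s : Finset ℕ} {junk j j' : ℕ} (hj : j < s.card) (hj' : j' < s.card) :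
    enumF s junk j < enumF s junk j' ↔ j < j' := by
  simp only [enumF, dif_pos hj, dif_pos hj', Subtype.coe_lt_coe, OrderIso.lt_iff_lt,
    Fin.mk_lt_mk]

lemma enumF_le {s : Finset ℕ} {junk j j' : ℕ} (hjj : j ≤ j') (hj' : j' < s.card) :
    enumF s junk j ≤ enumF s junk j' := by
  rcases eq_or_lt_of_le hjj with rfl | h
  · exact le_rfl
  · exact le_of_lt ((enumF_lt_iff (lt_trans h hj') hj').2 h)

lemma enumF_surj {s : Finset ℕ} {junk p : ℕ} (hp : p ∈ s) :
    ∃ j, j < s.card ∧ enumF s junk j = p := by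
  refine ⟨((s.orderIsoOfFin rfl).symm ⟨p, hp⟩ : Fin s.card), Fin.is_lt _, ?_⟩
  rw [enumF, dif_pos (Fin.is_lt _)]
  have : s.orderIsoOfFin rfl ⟨((s.orderIsoOfFin rfl).symm ⟨p, hp⟩ : Fin s.card),
      Fin.is_lt _⟩ = ⟨p, hp⟩ := by
    rw [show (⟨((s.orderIsoOfFin rfl).symm ⟨p, hp⟩ : Fin s.card), Fin.is_lt _⟩ : Fin s.card)
      = (s.orderIsoOfFin rfl).symm ⟨p, hp⟩ from rfl]
    exact (s.orderIsoOfFin rfl).apply_symm_apply _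
  rw [this]

lemma enumF_add {s : Finset ℕ} {junk j : ℕ} :
    ∀ k, j + k < s.card → enumF s junk j + k ≤ enumF s junk (j + k) := by
  intro k
  induction k with
  | zero => simp
  | succ n ih =>
    intro h
    have h1 := ih (by omega)
    have h2 : enumF s junk (j+n) < enumF s junk (j+n+1) :=
      (enumF_lt_iff (junk := junk) (by omega) (by omega)).2 (by omega)
    rw [show j + (n+1) = j+n+1 by omega]
    omega

lemma enumF_image {s : Finset ℕ} {junk : ℕ} :
    (Finset.range s.card).image (enumF s junk) = s := by
  apply Finset.Subset.antisymm
  · intro x hx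
    simp only [Finset.mem_image, Finset.mem_range] at hx
    obtain ⟨j, hj, rfl⟩ := hx
    exact enumF_mem hj
  · intro p hp
    obtain ⟨j, hj, hje⟩ := enumF_surj (junk := junk) hp
    simp only [Finset.mem_image, Finset.mem_range]
    exact ⟨j, hj, hje⟩

lemma mod_gap {Δ a b : ℕ} (hΔ : 0 < Δ) (hab : a < b) (h : a % Δ = b % Δ) : a + Δ ≤ b := by
  have hd : Δ ∣ b - a := (Nat.modEq_iff_dvd' (le_of_lt hab)).1 h
  have := Nat.le_of_dvd (by omega) hd
  omega

lemma exists_between {Δ x : ℕ} (hΔ : 0 < Δ) (q : ℕ → ℕ) (hmono : ∀ i, q i ≤ q (i+1))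
    (h0 : q 0 ≤ x) (hx : x ≤ q Δ) : ∃ t, t < Δ ∧ q t ≤ x ∧ x ≤ q (t+1) := by
  set t := Nat.findGreatest (fun j => q j ≤ x) (Δ-1) with ht
  have hqt : q t ≤ x := Nat.findGreatest_spec (P := fun j => q j ≤ x) (Nat.zero_le _) h0
  have htle : t ≤ Δ - 1 := Nat.findGreatest_le _
  refine ⟨t, by omega, hqt, ?_⟩
  rcases eq_or_lt_of_le htle with he | hlt
  · rw [show t + 1 = Δ by omega]
    exact hx
  · have := Nat.findGreatest_is_greatest (P := fun j => q j ≤ x) (n := Δ-1)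
      (show t < t+1 by omega) (by omega)
    omega

lemma ms_exists (hm : 0 < m) (hf : isPath m f) {Δ : ℕ} (hΔ : 0 < Δ) {a b : ℕ}
    (hab : a ≤ b) (hb : b ≤ 2*m-2)
    (hcard : (corners f m ∩ Finset.Ioo a b).card ≤ Δ - 1) :
    ∃ F : MultiSeg Δ m, F.chain ∧ F.cells = (Finset.Icc a b).image f := by
  classical
  set D := corners f m ∩ Finset.Ioo a b with hD
  set e := enumF D b with he
  set q : ℕ → ℕ := fun i => if i = 0 then a else e (i-1) with hq
  have hejunk : ∀ j, ¬ j < D.card → e j = b := by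
    intro j hj
    show enumF D b j = b
    rw [enumF, dif_neg hj]
  have he_range : ∀ j, a ≤ e j ∧ e j ≤ b := by
    intro j
    by_cases h : j < D.card
    · have : e j ∈ D := enumF_mem h
      rw [hD] at this
      simp only [Finset.mem_inter, Finset.mem_Ioo] at this
      omega
    · rw [hejunk j h]
      omega
  have he_mono : ∀ j j', j ≤ j' → e j ≤ e j' := by
    intro j j' hjj
    by_cases h' : j' < D.card
    · exact enumF_le hjj h'
    · rw [hejunk j' h']
      exact (he_range j).2
  have hq0 : q 0 = a := by simp [hq]
  have hq_succ : ∀ i, q (i+1) = e i := by intro i; simp [hq]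
  have hqΔ : q Δ = b := by
    obtain ⟨Δ', rfl⟩ : ∃ Δ', Δ = Δ' + 1 := ⟨Δ - 1, by omega⟩
    rw [hq_succ, hejunk Δ' (by omega)]
  have hq_mono : ∀ i, q i ≤ q (i+1) := by
    intro i
    cases i with
    | zero => rw [hq0, hq_succ]; exact (he_range 0).1
    | succ n => rw [hq_succ, hq_succ]; exact he_mono _ _ (by omega)
  have hq_le : ∀ i, a ≤ q i ∧ q i ≤ b := by
    intro i
    cases i with
    | zero => rw [hq0]; omega
    | succ n => rw [hq_succ]; exact he_range _
  have hstraight : ∀ i, straightOn f (q i) (q (i+1)) := by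
    intro i p hp1 hp2
    by_contra hc
    have h1 := hq_le i
    have h2 := hq_le (i+1)
    have hpD : p ∈ D := by
      rw [hD]
      simp only [Finset.mem_inter, Finset.mem_Ioo]
      refine ⟨?_, by omega, by omega⟩
      rw [corners]
      simp only [Finset.mem_filter, Finset.mem_Ioo]
      exact ⟨⟨by omega, by omega⟩, hc⟩
    obtain ⟨jp, hjp, hjpe⟩ := enumF_surj (junk := b) hpD
    have hjpe' : e jp = p := hjpe
    rw [hq_succ] at hp2
    cases i with
    | zero =>
      rw [hq0] at hp1
      have : e 0 ≤ e jp := he_mono 0 jp (by omega)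
      omega
    | succ n =>
      rw [hq_succ] at hp1
      by_cases hc1 : n < D.card
      · have hl : n < jp := by
          have := (enumF_lt_iff (junk := b) (s := D) hc1 hjp).1 (by show e n < e jp; rw [hjpe']; exact hp1)
          omega
        by_cases hc2 : n + 1 < D.card
        · have hr : jp < n + 1 := by
            have := (enumF_lt_iff (junk := b) (s := D) hjp hc2).1 (by show e jp < e (n+1); rw [hjpe']; exact hp2)
            omega
          omega
        · omega
      · rw [hejunk n hc1] at hp1
        have := (he_range (n+1)).2
        omega
  have hseg : ∀ i : ℕ, ∃ sg : Seg m, sg.first = f (q i) ∧ sg.last = f (q (i+1)) ∧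
      sg.cells = (Finset.Icc (q i) (q (i+1))).image f :=
    fun i => seg_exists hm hf (hq_mono i) (le_trans (hq_le (i+1)).2 hb) (hstraight i)
  refine ⟨fun j => (hseg (j : ℕ)).choose, ?_, ?_⟩
  · intro i h
    have h1 := (hseg i).choose_spec
    have h2 := (hseg (i+1)).choose_spec
    show (hseg ((⟨i, by omega⟩ : Fin Δ) : ℕ)).choose.last
      = (hseg ((⟨i+1, h⟩ : Fin Δ) : ℕ)).choose.first
    rw [show ((⟨i, by omega⟩ : Fin Δ) : ℕ) = i from rfl,
      show ((⟨i+1, h⟩ : Fin Δ) : ℕ) = i+1 from rfl]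
    rw [h1.2.1, h2.1]
  · ext x
    delta MultiSeg.cells
    simp only [Finset.mem_biUnion, Finset.mem_univ, true_and]
    constructor
    · rintro ⟨j, hj⟩
      rw [(hseg (j : ℕ)).choose_spec.2.2] at hj
      simp only [Finset.mem_image, Finset.mem_Icc] at hj ⊢
      obtain ⟨i, ⟨hi1, hi2⟩, rfl⟩ := hj
      exact ⟨i, ⟨le_trans (hq_le _).1 hi1, le_trans hi2 (hq_le _).2⟩, rfl⟩
    · intro hx
      simp only [Finset.mem_image, Finset.mem_Icc] at hx
      obtain ⟨i, ⟨hi1, hi2⟩, rfl⟩ := hx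
      obtain ⟨t, htΔ, ht1, ht2⟩ := exists_between (x := i) hΔ q hq_mono (by rw [hq0]; exact hi1) (by rw [hqΔ]; exact hi2)
      refine ⟨⟨t, htΔ⟩, ?_⟩
      rw [show ((⟨t, htΔ⟩ : Fin Δ) : ℕ) = t from rfl, (hseg t).choose_spec.2.2]
      exact Finset.mem_image_of_mem f (Finset.mem_Icc.2 ⟨ht1, ht2⟩)

end Stmt18Aux

open Stmt18Aux

/-- for any `Δ ≥ 1`, there is a family of pairwise non-conflicting
`Δ`-multisegments whose total covered value is at least `(Δ−1)/Δ` times the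
table's score (the maximum value of a monotone lattice path). -/
theorem stmt18 (m Δ : ℕ) (hm : 0 < m) (hΔ : 0 < Δ)
    (v : ℕ → ℕ → ℝ) (hv : ∀ x y, 0 ≤ v x y)
    (score : ℝ)
    (hscore : IsGreatest
      {t : ℝ | ∃ f : ℕ → ℕ × ℕ, isPath m f ∧
        t = ∑ i ∈ Finset.range (2 * m - 1), v (f i).1 (f i).2}
      score) :
    ∃ (k : ℕ) (F : Fin k → MultiSeg Δ m),
      (∀ t, (F t).chain) ∧
      (∀ t t', t ≠ t' → msNonConf (F t) (F t')) ∧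
      ((Δ : ℝ) - 1) / (Δ : ℝ) * score ≤ ∑ t, msValue v (F t) := by
  classical
  obtain ⟨f, hf, hseq⟩ := hscore.1
  by_cases hΔ1 : Δ = 1
  · subst hΔ1
    refine ⟨0, Fin.elim0, fun t => t.elim0, fun t => t.elim0, ?_⟩
    norm_num
  have hΔ2 : 2 ≤ Δ := by omega
  set g : ℕ → ℝ := fun i => v (f i).1 (f i).2 with hg
  set C := corners f m with hC
  set K := C.card with hK
  set c := enumF C (2*m-2) with hc
  set S := ∑ i ∈ Finset.Icc 0 (2*m-2), g i with hS
  have hg0 : ∀ i, 0 ≤ g i := fun i => hv _ _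
  have hcmem : ∀ j, j < K → c j ∈ C := fun j hj => enumF_mem hj
  have hcbound : ∀ j, j < K → 0 < c j ∧ c j < 2*m-2 := by
    intro j hj
    have := corners_mem (hcmem j hj)
    exact ⟨this.1, this.2.1⟩
  have hcub : ∀ j, c j ≤ 2*m-2 := by
    intro j
    by_cases hj : j < K
    · have := hcbound j hj; omega
    · rw [hc]
      show enumF C (2*m-2) j ≤ 2*m-2
      rw [enumF, dif_neg (by rw [hK] at hj; exact hj)]
  have hclt : ∀ {j j'}, j < K → j' < K → (c j < c j' ↔ j < j') :=
    fun hj hj' => enumF_lt_iff hj hj'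
  have hcle : ∀ {j j'}, j ≤ j' → j' < K → c j ≤ c j' := fun h h' => enumF_le h h'
  have hcsurj : ∀ {p}, p ∈ C → ∃ j, j < K ∧ c j = p := fun hp => enumF_surj hp
  have hcadd : ∀ j k, j + k < K → c j + k ≤ c (j + k) := fun j k h => enumF_add k h
  have hcinj : ∀ {j j'}, j < K → j' < K → c j = c j' → j = j' := by
    intro j j' hj hj' he
    rcases Nat.lt_trichotomy j j' with h | h | h
    · have := (hclt hj hj').2 h; omega
    · exact h
    · have := (hclt hj' hj).2 h; omega
  -- the loss of each offset
  set loss : ℕ → ℝ := fun r => ∑ j ∈ (Finset.range K).filter (fun j => j % Δ = r), g (c j)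
    with hloss
  have hlosssum : ∑ r ∈ Finset.range Δ, loss r = ∑ j ∈ Finset.range K, g (c j) := by
    rw [hloss]
    exact Finset.sum_fiberwise_of_maps_to
      (fun j _ => Finset.mem_range.2 (Nat.mod_lt j hΔ)) _
  have hcornersum : ∑ j ∈ Finset.range K, g (c j) ≤ S := by
    have hinj : ∀ x ∈ Finset.range K, ∀ y ∈ Finset.range K, c x = c y → x = y := by
      intro x hx y hy
      exact hcinj (Finset.mem_range.1 hx) (Finset.mem_range.1 hy)
    rw [show ∑ j ∈ Finset.range K, g (c j) = ∑ i ∈ (Finset.range K).image c, g i from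
      (Finset.sum_image hinj).symm]
    apply Finset.sum_le_sum_of_subset_of_nonneg
    · intro x hx
      simp only [Finset.mem_image, Finset.mem_range] at hx
      obtain ⟨j, hj, rfl⟩ := hx
      have := hcbound j hj
      rw [Finset.mem_Icc]
      omega
    · intro i _ _
      exact hg0 i
  have hΔR : (0:ℝ) < (Δ:ℝ) := by positivity
  obtain ⟨r, hrmem, hrloss⟩ : ∃ r ∈ Finset.range Δ, loss r ≤ S / Δ := by
    by_contra hcon
    push_neg at hcon
    have hlt : ∑ r ∈ Finset.range Δ, (S/Δ) < ∑ r ∈ Finset.range Δ, loss r :=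
      Finset.sum_lt_sum_of_nonempty ⟨0, Finset.mem_range.2 (by omega)⟩ hcon
    rw [Finset.sum_const, Finset.card_range, nsmul_eq_mul] at hlt
    have : (Δ:ℝ) * (S/Δ) = S := by field_simp
    rw [this] at hlt
    linarith [hlosssum ▸ hcornersum]
  have hr : r < Δ := Finset.mem_range.1 hrmem
  -- cut indices
  set I := (Finset.range K).filter (fun j => j % Δ = r) with hI
  set T := I.card with hT
  set cut := enumF I K with hcut
  have hcutI : ∀ t, t < T → cut t ∈ I := fun t ht => enumF_mem ht
  have hcutK : ∀ t, t < T → cut t < K := by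
    intro t ht
    have := hcutI t ht
    rw [hI, Finset.mem_filter, Finset.mem_range] at this
    exact this.1
  have hcutmod : ∀ t, t < T → cut t % Δ = r := by
    intro t ht
    have := hcutI t ht
    rw [hI, Finset.mem_filter] at this
    exact this.2
  have hcutlt : ∀ {t t'}, t < T → t' < T → (cut t < cut t' ↔ t < t') :=
    fun h h' => enumF_lt_iff h h'
  have hcutle : ∀ {t t'}, t ≤ t' → t' < T → cut t ≤ cut t' := fun h h' => enumF_le h h'
  have hcutsurj : ∀ {p}, p ∈ I → ∃ t, t < T ∧ cut t = p := fun hp => enumF_surj hp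
  have hcut_ge : ∀ t, t + 1 < T → cut t + Δ ≤ cut (t+1) := by
    intro t ht
    exact mod_gap hΔ ((hcutlt (by omega) ht).2 (by omega))
      ((hcutmod t (by omega)).trans (hcutmod (t+1) ht).symm)
  have hcut_le : ∀ t, t + 1 < T → cut (t+1) ≤ cut t + Δ := by
    intro t ht
    by_contra hcon
    push_neg at hcon
    have hy : cut t + Δ ∈ I := by
      rw [hI, Finset.mem_filter, Finset.mem_range]
      constructor
      · have := hcutK (t+1) ht; omega
      · rw [Nat.add_mod_right]
        exact hcutmod t (by omega)
    obtain ⟨j, hj, hje⟩ := hcutsurj hy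
    have h1 : t < j := by
      have := (hcutlt (show t < T by omega) hj).1 (by omega)
      omega
    have h2 : j < t + 1 := by
      have := (hcutlt hj ht).1 (by omega)
      omega
    omega
  have hcut0 : 0 < T → cut 0 ≤ r := by
    intro hT0
    by_contra hcon
    push_neg at hcon
    have hrI : r ∈ I := by
      rw [hI, Finset.mem_filter, Finset.mem_range]
      have := hcutK 0 hT0
      exact ⟨by omega, Nat.mod_eq_of_lt hr⟩
    obtain ⟨j, hj, hje⟩ := hcutsurj hrI
    have := (hcutlt hj hT0).1 (by omega)
    omega
  have hlastcut : 0 < T → K ≤ cut (T-1) + Δ := by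
    intro hT0
    by_contra hcon
    push_neg at hcon
    have hy : cut (T-1) + Δ ∈ I := by
      rw [hI, Finset.mem_filter, Finset.mem_range]
      refine ⟨hcon, ?_⟩
      rw [Nat.add_mod_right]
      exact hcutmod _ (by omega)
    obtain ⟨j, hj, hje⟩ := hcutsurj hy
    have := (hcutlt (show T-1 < T by omega) hj).1 (by omega)
    omega
  have hT0K : T = 0 → K ≤ r := by
    intro h0
    by_contra hcon
    push_neg at hcon
    have hrI : r ∈ I := by
      rw [hI, Finset.mem_filter, Finset.mem_range]
      exact ⟨hcon, Nat.mod_eq_of_lt hr⟩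
    have := Finset.card_pos.2 ⟨r, hrI⟩
    rw [← hT] at this
    omega
  -- blocks
  set A : ℕ → ℕ := fun t => if t = 0 then 0 else c (cut (t-1)) + 1 with hA
  set B : ℕ → ℕ := fun t => if t = T then 2*m-2 else c (cut t) - 1 with hB
  have hA0 : A 0 = 0 := by simp [hA]
  have hApos : ∀ t, t ≠ 0 → A t = c (cut (t-1)) + 1 := by
    intro t h; simp [hA, h]
  have hBT : B T = 2*m-2 := by simp [hB]
  have hBlt : ∀ t, t ≠ T → B t = c (cut t) - 1 := by
    intro t h; simp [hB, h]
  have hBN : ∀ t, B t ≤ 2*m-2 := by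
    intro t
    by_cases h : t = T
    · rw [h, hBT]
    · rw [hBlt t h]
      have := hcub (cut t)
      omega
  have hAB : ∀ t, t ≤ T → A t ≤ B t := by
    intro t ht
    by_cases h0 : t = 0
    · rw [h0, hA0]; omega
    · have hA' := hApos t h0
      have hcutK1 : cut (t-1) < K := hcutK _ (by omega)
      have hb1 := hcbound _ hcutK1
      by_cases hT' : t = T
      · have hB' : B t = 2*m-2 := by rw [hT', hBT]
        omega
      · have hB' := hBlt t hT'
        have hge := hcut_ge (t-1) (by omega)
        rw [show t - 1 + 1 = t by omega] at hge
        have hcutK2 : cut t < K := hcutK _ (by omega)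
        have hadd : c (cut (t-1)) + (cut t - cut (t-1)) ≤ c (cut t) := by
          have := hcadd (cut (t-1)) (cut t - cut (t-1)) (by omega)
          rw [show cut (t-1) + (cut t - cut (t-1)) = cut t by omega] at this
          exact this
        omega
  have hsorted : ∀ t t', t < t' → t' ≤ T → B t < A t' := by
    intro t t' htt ht'
    rw [hApos t' (by omega), hBlt t (by omega)]
    have h1 : cut t ≤ cut (t'-1) := hcutle (by omega) (by omega)
    have h2 : c (cut t) ≤ c (cut (t'-1)) := hcle h1 (hcutK _ (by omega))
    omega
  have hsep : ∀ t t', t < t' → t' ≤ T →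
      (f (B t)).1 + 1 ≤ (f (A t')).1 ∧ (f (B t)).2 + 1 ≤ (f (A t')).2 := by
    intro t t' htt ht'
    set p := c (cut (t'-1)) with hp
    have hpK : cut (t'-1) < K := hcutK _ (by omega)
    have hpC : p ∈ C := hcmem _ hpK
    have hpb := hcbound _ hpK
    have hjump := corner_jump hf (show p ∈ corners f m from hpC)
    have hA' : A t' = p + 1 := hApos t' (by omega)
    have hBp : B t ≤ p - 1 := by
      rw [hBlt t (by omega)]
      have : c (cut t) ≤ p := hcle (hcutle (by omega) (by omega) : cut t ≤ cut (t'-1)) hpK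
      omega
    have hmono := path_mono hf hBp (show p - 1 ≤ 2*m-2 by omega)
    rw [hA']
    omega
  have hcount : ∀ t, t ≤ T → (corners f m ∩ Finset.Ioo (A t) (B t)).card ≤ Δ - 1 := by
    intro t ht
    set l := if t = 0 then 0 else cut (t-1) + 1 with hl
    set u := if t = T then K else cut t with hu
    have hsub : corners f m ∩ Finset.Ioo (A t) (B t) ⊆ (Finset.Ico l u).image c := by
      intro p hp
      simp only [Finset.mem_inter, Finset.mem_Ioo] at hp
      obtain ⟨hpC, hpA, hpB⟩ := hp
      obtain ⟨j, hjK, hjc⟩ := hcsurj (show p ∈ C from hpC)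
      have hjl : l ≤ j := by
        by_cases h0 : t = 0
        · simp [hl, h0]
        · rw [hl, if_neg h0]
          have hA' := hApos t h0
          have hcutK1 : cut (t-1) < K := hcutK _ (by omega)
          have h1 : c (cut (t-1)) < c j := by omega
          have := (hclt hcutK1 hjK).1 h1
          omega
      have hju : j < u := by
        by_cases hT' : t = T
        · rw [hu, if_pos hT']; exact hjK
        · rw [hu, if_neg hT']
          have hB' := hBlt t hT'
          have hcutK2 : cut t < K := hcutK _ (by omega)
          have hb := hcbound _ hcutK2
          have h1 : c j < c (cut t) := by omega
          exact (hclt hjK hcutK2).1 h1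
      exact Finset.mem_image.2 ⟨j, Finset.mem_Ico.2 ⟨hjl, hju⟩, hjc⟩
    have hcard1 := le_trans (Finset.card_le_card hsub) Finset.card_image_le
    rw [Nat.card_Ico] at hcard1
    have hul : u ≤ l + (Δ - 1) := by
      by_cases h0 : t = 0 <;> by_cases hT' : t = T
      · rw [hl, hu, if_pos h0, if_pos hT']
        have := hT0K (by omega)
        omega
      · rw [hl, hu, if_pos h0, if_neg hT']
        have h1 := hcut0 (by omega)
        have h2 : cut 0 ≤ cut t := hcutle (by omega) (by omega)
        -- u = cut t; need cut t ≤ Δ - 1 : cut t % Δ = r and cut t ... 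
        -- t = 0 here so cut t = cut 0 ≤ r
        rw [show t = 0 from h0]
        omega
      · rw [hl, hu, if_neg h0, if_pos hT']
        have := hlastcut (by omega)
        rw [show t - 1 = T - 1 by omega]
        omega
      · rw [hl, hu, if_neg h0, if_neg hT']
        have := hcut_le (t-1) (by omega)
        rw [show t - 1 + 1 = t by omega] at this
        omega
    omega
  -- coverage of non-cut positions
  have hcover : ∀ i, i ≤ 2*m-2 → (∀ t, t < T → i ≠ c (cut t)) →
      ∃ t, t ≤ T ∧ A t ≤ i ∧ i ≤ B t := by
    intro i hi hnc
    set t := Nat.findGreatest (fun t => A t ≤ i) T with ht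
    have hAt : A t ≤ i :=
      Nat.findGreatest_spec (P := fun t => A t ≤ i) (Nat.zero_le _)
        (show A 0 ≤ i by rw [hA0]; omega)
    have htT : t ≤ T := Nat.findGreatest_le _
    refine ⟨t, htT, hAt, ?_⟩
    by_cases hteq : t = T
    · rw [hteq, hBT]; exact hi
    · have hnext : ¬ A (t+1) ≤ i :=
        Nat.findGreatest_is_greatest (P := fun t => A t ≤ i) (n := T) (by omega) (by omega)
      have hA1 : A (t+1) = c (cut t) + 1 := by
        rw [hApos (t+1) (by omega)]
        simp
      have hne := hnc t (by omega)
      have hBt := hBlt t hteq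
      omega
  set cutPos := (Finset.range T).image (fun t => c (cut t)) with hcutPos
  have hcutPosSub : cutPos ⊆ Finset.Icc 0 (2*m-2) := by
    intro x hx
    rw [hcutPos] at hx
    simp only [Finset.mem_image, Finset.mem_range] at hx
    obtain ⟨t, htT, rfl⟩ := hx
    have := hcbound _ (hcutK t htT)
    rw [Finset.mem_Icc]
    omega
  have hdisj : (↑(Finset.range (T+1)) : Set ℕ).PairwiseDisjoint
      (fun t => Finset.Icc (A t) (B t)) := by
    intro t1 h1 t2 h2 hne
    simp only [Finset.coe_range, Set.mem_Iio] at h1 h2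
    have key : ∀ a1 a2, a1 < a2 → a2 ≤ T →
        Disjoint (Finset.Icc (A a1) (B a1)) (Finset.Icc (A a2) (B a2)) := by
      intro a1 a2 haa ha2
      rw [Finset.disjoint_left]
      intro x hx1 hx2
      rw [Finset.mem_Icc] at hx1 hx2
      have := hsorted a1 a2 haa ha2
      omega
    rcases Nat.lt_or_ge t1 t2 with h | h
    · exact key t1 t2 h (by omega)
    · exact (key t2 t1 (by omega) (by omega)).symm
  have hP : (Finset.range (T+1)).biUnion (fun t => Finset.Icc (A t) (B t))
      = Finset.Icc 0 (2*m-2) \ cutPos := by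
    ext i
    constructor
    · intro hmem
      rw [Finset.mem_biUnion] at hmem
      obtain ⟨t, htmem, hti⟩ := hmem
      rw [Finset.mem_range] at htmem
      rw [Finset.mem_Icc] at hti
      rw [Finset.mem_sdiff, Finset.mem_Icc]
      refine ⟨⟨Nat.zero_le _, le_trans hti.2 (hBN t)⟩, ?_⟩
      intro hcontra
      rw [hcutPos, Finset.mem_image] at hcontra
      obtain ⟨t0, ht0, heq⟩ := hcontra
      rw [Finset.mem_range] at ht0
      rcases Nat.lt_or_ge t0 t with hlt | hge
      · have hA' := hApos t (by omega)
        have h1 : cut t0 ≤ cut (t-1) := hcutle (by omega) (by omega)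
        have h2 : c (cut t0) ≤ c (cut (t-1)) := hcle h1 (hcutK _ (by omega))
        omega
      · have hteq : t ≠ T := by omega
        have hB' := hBlt t hteq
        have h1 : cut t ≤ cut t0 := hcutle hge ht0
        have h2 : c (cut t) ≤ c (cut t0) := hcle h1 (hcutK _ ht0)
        have hb := hcbound _ (hcutK t (by omega))
        omega
    · intro hmem
      rw [Finset.mem_sdiff, Finset.mem_Icc] at hmem
      obtain ⟨⟨_, hi⟩, hnc⟩ := hmem
      obtain ⟨t, htT, h1, h2⟩ := hcover i hi (fun t0 ht0 heq =>
        hnc (by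
          rw [hcutPos, Finset.mem_image]
          exact ⟨t0, Finset.mem_range.2 ht0, heq.symm⟩))
      rw [Finset.mem_biUnion]
      exact ⟨t, Finset.mem_range.2 (by omega), Finset.mem_Icc.2 ⟨h1, h2⟩⟩
  have hcutinj : ∀ x ∈ Finset.range T, ∀ y ∈ Finset.range T,
      c (cut x) = c (cut y) → x = y := by
    intro x hx y hy hxy
    rw [Finset.mem_range] at hx hy
    have h1 : cut x = cut y := hcinj (hcutK x hx) (hcutK y hy) hxy
    rcases Nat.lt_trichotomy x y with h | h | h
    · have := (hcutlt hx hy).2 h; omega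
    · exact h
    · have := (hcutlt hy hx).2 h; omega
  have hcutsum : ∑ i ∈ cutPos, g i = loss r := by
    rw [hcutPos, Finset.sum_image hcutinj]
    have hIimg : (Finset.range T).image cut = I := by
      rw [hT, hcut]
      exact enumF_image
    have hcutinj2 : ∀ x ∈ Finset.range T, ∀ y ∈ Finset.range T, cut x = cut y → x = y := by
      intro x hx y hy hxy
      rw [Finset.mem_range] at hx hy
      rcases Nat.lt_trichotomy x y with h | h | h
      · have := (hcutlt hx hy).2 h; omega
      · exact h
      · have := (hcutlt hy hx).2 h; omega
    show ∑ t ∈ Finset.range T, g (c (cut t)) = ∑ j ∈ I, g (c j)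
    rw [← hIimg, Finset.sum_image hcutinj2]
  -- multisegments
  have hms : ∀ t : Fin (T+1), ∃ F : MultiSeg Δ m, F.chain ∧
      F.cells = (Finset.Icc (A t.val) (B t.val)).image f := by
    intro t
    have htT : t.val ≤ T := Nat.lt_succ_iff.mp t.isLt
    exact ms_exists hm hf hΔ (hAB _ htT) (hBN _) (hcount _ htT)
  refine ⟨T+1, fun t => (hms t).choose, fun t => (hms t).choose_spec.1, ?_, ?_⟩
  · -- non-conflicting
    have hcellsub : ∀ t : Fin (T+1), ∀ j : Fin Δ, ((hms t).choose j).cells ⊆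
        (Finset.Icc (A t.val) (B t.val)).image f := by
      intro t j
      have hsub : ((hms t).choose j).cells ⊆ ((hms t).choose).cells :=
        Finset.subset_biUnion_of_mem (fun i => ((hms t).choose i).cells) (Finset.mem_univ j)
      rw [(hms t).choose_spec.2] at hsub
      exact hsub
    have key : ∀ t t' : Fin (T+1), t.val < t'.val → ∀ i j,
        segPrecedes ((hms t').choose j) ((hms t).choose i) := by
      intro t t' htt i j cA hcA cB hcB
      obtain ⟨iA, hiA, rfl⟩ := Finset.mem_image.1 (hcellsub t' j hcA)
      obtain ⟨iB, hiB, rfl⟩ := Finset.mem_image.1 (hcellsub t i hcB)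
      rw [Finset.mem_Icc] at hiA hiB
      have ht'T : t'.val ≤ T := Nat.lt_succ_iff.mp t'.isLt
      have hsepv := hsep t.val t'.val htt ht'T
      have hm1 := path_mono hf (show iB ≤ B t.val from hiB.2)
        (le_trans (hBN t.val) le_rfl)
      have hm2 := path_mono hf (show A t'.val ≤ iA from hiA.1)
        (le_trans hiA.2 (hBN t'.val))
      exact ⟨by omega, by omega⟩
    intro t t' hne
    intro i j
    rcases Nat.lt_or_ge t.val t'.val with h | h
    · exact Or.inr (key t t' h i j)
    · have h' : t'.val < t.val := by
        rcases Nat.lt_or_ge t'.val t.val with h2 | h2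
        · exact h2
        · exact absurd (Fin.ext (by omega)) hne
      exact Or.inl (key t' t h' j i)
  · -- value bound
    have hval : ∀ t : Fin (T+1),
        msValue v ((hms t).choose) = ∑ i ∈ Finset.Icc (A t.val) (B t.val), g i := by
      intro t
      rw [msValue, (hms t).choose_spec.2]
      rw [Finset.sum_image]
      intro x hx y hy hxy
      rw [Finset.mem_coe, Finset.mem_Icc] at hx hy
      exact path_inj hf (le_trans hx.2 (hBN _)) (le_trans hy.2 (hBN _)) hxy
    have htot : ∑ t : Fin (T+1), msValue v ((hms t).choose) = S - loss r := by
      rw [Finset.sum_congr rfl (fun t _ => hval t)]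
      rw [Fin.sum_univ_eq_sum_range (fun n => ∑ i ∈ Finset.Icc (A n) (B n), g i) (T+1)]
      rw [← Finset.sum_biUnion hdisj, hP]
      rw [eq_sub_iff_add_eq, ← hcutsum]
      exact Finset.sum_sdiff hcutPosSub
    rw [htot]
    have hscoreS : score = S := by
      rw [hseq, hS]
      apply Finset.sum_congr
      · ext x
        simp only [Finset.mem_range, Finset.mem_Icc]
        omega
      · intro x _; rfl
    rw [hscoreS]
    have hfe : ((Δ:ℝ) - 1) / (Δ:ℝ) * S = S - S / Δ := by
      field_simp
    rw [hfe]
    linarith
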